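/- Let n ≥ 2 be an integer and λ₁, …, λ_{n+1} ∈ [0, π]. Then the identity matrix I belongs to the set product C(λ₁)⋯C(λ_{n+1}) in SU(2) if and only if there exists λ ∈ [0, π] such that I belongs to the set product C(λ₁)⋯C(λ_{n−1})C(λ) and I belongs to the set product C(λ)C(λ_n)C(λ_{n+1}). -/

import Mathlib

open Matrix Complex Pointwise

/-- `SU(2)`: the subgroup of the unitary group `U(2)` (2×2 complex unitary matrices)
consisting of the matrices of determinant 1. -/
noncomputable def SU2 : Subgroup (Matrix.unitaryGroup (Fin 2) ℂ) :=
  MonoidHom.ker (Matrix.detMonoidHom.comp (Submonoid.subtype _))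

theorem mem_SU2_iff (A : Matrix.unitaryGroup (Fin 2) ℂ) :
    A ∈ SU2 ↔ Matrix.det (A : Matrix (Fin 2) (Fin 2) ℂ) = 1 := Iff.rfl

/-- The diagonal matrix `diag(e^{iλ}, e^{-iλ})` as an element of `SU(2)`. -/
noncomputable def su2diag (l : ℝ) : SU2 :=
  ⟨⟨Matrix.diagonal ![Complex.exp (l * Complex.I), Complex.exp (-(l * Complex.I))], by
    rw [Matrix.mem_unitaryGroup_iff]
    rw [Matrix.star_eq_conjTranspose, Matrix.diagonal_conjTranspose,
      Matrix.diagonal_mul_diagonal]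
    have h : (fun i => ![Complex.exp (l * Complex.I), Complex.exp (-(l * Complex.I))] i *
        star ![Complex.exp (l * Complex.I), Complex.exp (-(l * Complex.I))] i)
        = (1 : Fin 2 → ℂ) := by
      funext i
      fin_cases i <;>
        simp [Pi.star_apply, ← Complex.exp_conj, ← Complex.exp_add]
    rw [h]; exact Matrix.diagonal_one⟩, by
    rw [mem_SU2_iff]
    rw [Matrix.det_diagonal]
    simp [Fin.prod_univ_two, ← Complex.exp_add]⟩

/-- The conjugacy class `C(λ)` of `diag(e^{iλ}, e^{-iλ})` in `SU(2)`. -/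
noncomputable def conjClass (l : ℝ) : Set SU2 :=
  { g | ∃ h : SU2, h * su2diag l * h⁻¹ = g }

/-- The pointwise set product `C(λ₁)⋯C(λ_m)` of the conjugacy classes
`C(λ₁), …, C(λ_m)` in `SU(2)`. -/
noncomputable def classProd {m : ℕ} (l : Fin m → ℝ) : Set SU2 :=
  (List.ofFn fun i => conjClass (l i)).prod

-- infrastructure
def toMat (g : SU2) : Matrix (Fin 2) (Fin 2) ℂ := ((g : Matrix.unitaryGroup (Fin 2) ℂ) : Matrix (Fin 2) (Fin 2) ℂ)

lemma toMat_mul (g h : SU2) : toMat (g * h) = toMat g * toMat h := rfl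

lemma su2_ext {g h : SU2} (H : toMat g = toMat h) : g = h :=
  Subtype.ext (Subtype.ext H)

lemma toMat_diag (l : ℝ) : toMat (su2diag l) =
    Matrix.diagonal ![Complex.exp (l * Complex.I), Complex.exp (-(l * Complex.I))] := rfl

lemma toMat_unitary (g : SU2) : toMat g * star (toMat g) = 1 :=
  (Matrix.mem_unitaryGroup_iff.mp (g : Matrix.unitaryGroup (Fin 2) ℂ).2)

lemma toMat_det (g : SU2) : (toMat g).det = 1 := g.2

-- construct an element of SU2 from a matrix
noncomputable def mkSU2 (A : Matrix (Fin 2) (Fin 2) ℂ) (h1 : A * star A = 1) (h2 : A.det = 1) : SU2 :=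
  ⟨⟨A, Matrix.mem_unitaryGroup_iff.mpr h1⟩, h2⟩

lemma toMat_mkSU2 (A : Matrix (Fin 2) (Fin 2) ℂ) (h1 : A * star A = 1) (h2 : A.det = 1) :
    toMat (mkSU2 A h1 h2) = A := rfl

noncomputable def weyl : SU2 := mkSU2 !![0, 1; -1, 0]
  (by ext i j; fin_cases i <;> fin_cases j <;>
      simp [Matrix.mul_apply, Fin.sum_univ_two, Matrix.star_apply])
  (by simp [Matrix.det_fin_two_of])

lemma weyl_conj (l : ℝ) : su2diag l * weyl * su2diag l = weyl := by
  apply su2_ext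
  rw [toMat_mul, toMat_mul, toMat_diag]
  show _ * !![0,1;-1,0] * _ = !![0,1;-1,0]
  ext i j
  fin_cases i <;> fin_cases j <;>
    simp [Matrix.mul_apply, Fin.sum_univ_two, Matrix.diagonal, ← Complex.exp_add]

lemma inv_diag (l : ℝ) : (su2diag l)⁻¹ = weyl⁻¹ * su2diag l * weyl := by
  have h := weyl_conj l
  have : (weyl⁻¹ * su2diag l * weyl) * su2diag l = 1 := by
    rw [mul_assoc, mul_assoc, ← mul_assoc (su2diag l), h, inv_mul_cancel]
  rw [eq_comm]
  exact eq_inv_of_mul_eq_one_left this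

lemma inv_mem_conjClass {l : ℝ} {g : SU2} (hg : g ∈ conjClass l) : g⁻¹ ∈ conjClass l := by
  obtain ⟨h, rfl⟩ := hg
  refine ⟨h * weyl⁻¹, ?_⟩
  simp only [_root_.mul_inv_rev, inv_inv]; rw [inv_diag]
  group

lemma conj_mem_conjClass {l : ℝ} {g : SU2} (k : SU2) (hg : g ∈ conjClass l) :
    k * g * k⁻¹ ∈ conjClass l := by
  obtain ⟨h, rfl⟩ := hg
  exact ⟨k * h, by group⟩

lemma mem_conjClass_of {g h : SU2} {l : ℝ} (H : h * su2diag l = g * h) : g ∈ conjClass l :=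
  ⟨h, by rw [H, mul_inv_cancel_right]⟩

lemma conj_exp_I (x : ℝ) : (starRingEnd ℂ) (Complex.exp (x * Complex.I)) =
    Complex.exp (-(x * Complex.I)) := by
  rw [← Complex.exp_conj]
  congr 1
  simp

lemma diag_eq (x y : ℂ) : Matrix.diagonal ![x, y] = !![x, 0; 0, y] := by
  ext i j; fin_cases i <;> fin_cases j <;> simp [Matrix.diagonal]

lemma exists_mem_conjClass (g : SU2) : ∃ μ ∈ Set.Icc (0:ℝ) Real.pi, g ∈ conjClass μ := by
  set A := toMat g with hA
  have h1 : A * star A = 1 := toMat_unitary g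
  have h2 : A.det = 1 := toMat_det g
  have hadj : A * A.adjugate = 1 := by rw [Matrix.mul_adjugate, h2, one_smul]
  have hstar : star A = A.adjugate := by
    rw [← Matrix.inv_eq_right_inv h1, Matrix.inv_eq_right_inv hadj]
  set a := A 0 0 with ha
  set b := A 0 1 with hb
  have hd : A 1 1 = (starRingEnd ℂ) a := by
    have := congrFun (congrFun hstar 0) 0
    rw [Matrix.adjugate_fin_two] at this
    simpa [Matrix.star_apply] using this.symm
  have hc : A 1 0 = -(starRingEnd ℂ) b := by
    have := congrFun (congrFun hstar 1) 0
    rw [Matrix.adjugate_fin_two] at this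
    rw [show (!![A 1 1, -A 0 1; -A 1 0, A 0 0] : Matrix (Fin 2) (Fin 2) ℂ) 1 0 = -A 1 0 by
      simp] at this
    simp only [Matrix.star_apply, Complex.star_def] at this
    rw [← hb] at this
    linear_combination this
  have hdet : a * A 1 1 - b * A 1 0 = 1 := by
    show A 0 0 * A 1 1 - A 0 1 * A 1 0 = 1
    rw [← Matrix.det_fin_two]
    exact h2
  have hnorm : a * (starRingEnd ℂ) a + b * (starRingEnd ℂ) b = 1 := by
    rw [hd, hc] at hdet
    linear_combination hdet
  set t : ℝ := a.re with ht
  have hnormR : Complex.normSq a + Complex.normSq b = 1 := by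
    have := hnorm
    rw [Complex.mul_conj, Complex.mul_conj] at this
    exact_mod_cast this
  have hsqa : Complex.normSq a ≤ 1 := by
    have := Complex.normSq_nonneg b; linarith
  have ht2 : t ^ 2 + a.im ^ 2 = Complex.normSq a := by
    rw [Complex.normSq_apply]; ring
  have ht1 : -1 ≤ t ∧ t ≤ 1 := by
    constructor <;> nlinarith [sq_nonneg a.im, sq_nonneg (t - 1), sq_nonneg (t + 1)]
  set μ := Real.arccos t with hμdef
  have hμmem : μ ∈ Set.Icc (0:ℝ) Real.pi := ⟨Real.arccos_nonneg t, Real.arccos_le_pi t⟩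
  have hcos : Real.cos μ = t := Real.cos_arccos ht1.1 ht1.2
  have hsin : Real.sin μ = Real.sqrt (1 - t ^ 2) := Real.sin_arccos t
  set e : ℂ := Complex.exp (μ * Complex.I) with he
  set e' : ℂ := Complex.exp (-(μ * Complex.I)) with he'
  have hee' : e * e' = 1 := by rw [he, he', ← Complex.exp_add]; simp
  have hce : (starRingEnd ℂ) e = e' := conj_exp_I μ
  have heform : e = (t : ℂ) + (Real.sqrt (1 - t ^ 2) : ℂ) * Complex.I := by
    rw [he, Complex.exp_mul_I, ← Complex.ofReal_cos, ← Complex.ofReal_sin, hcos, hsin]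
  have hsum : e + e' = 2 * (t : ℂ) := by
    rw [← hce, heform]
    simp [map_add, _root_.map_mul, Complex.conj_I, Complex.conj_ofReal]
    ring
  have haconj : a + (starRingEnd ℂ) a = 2 * (t : ℂ) := by
    rw [Complex.add_conj]
    push_cast
    ring
  have hq : e ^ 2 - (a + (starRingEnd ℂ) a) * e + 1 = 0 := by
    rw [haconj, ← hsum]
    linear_combination -hee'
  have hq' : e' ^ 2 - (a + (starRingEnd ℂ) a) * e' + 1 = 0 := by
    rw [haconj, ← hsum]
    linear_combination -hee'
  refine ⟨μ, hμmem, ?_⟩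
  by_cases hb0 : b = 0
  · -- diagonal case
    have hnsa : Complex.normSq a = 1 := by
      rw [hb0] at hnormR; simpa using hnormR
    have him2 : a.im ^ 2 = 1 - t ^ 2 := by rw [hnsa] at ht2; linarith
    have hc0 : A 1 0 = 0 := by rw [hc, hb0]; simp
    by_cases him0 : 0 ≤ a.im
    · have hae : a = e := by
        rw [heform]
        apply Complex.ext
        · simp; exact ht.symm
        · simp only [Complex.add_im, Complex.ofReal_im, Complex.mul_im, Complex.I_im,
            Complex.ofReal_re, Complex.I_re]
          rw [← him2, Real.sqrt_sq him0]
          ring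
      have hgmat : A = !![e, 0; 0, e'] := by
        rw [Matrix.eta_fin_two A, hc0, hd, ← ha, ← hb, hb0, hae, hce]
      apply mem_conjClass_of (h := 1)
      rw [one_mul, mul_one]
      apply su2_ext
      rw [toMat_diag, ← he, ← he', diag_eq, ← hA, hgmat]
    · have hae : a = e' := by
        have : e' = (t : ℂ) - (Real.sqrt (1 - t ^ 2) : ℂ) * Complex.I := by
          rw [← hce, heform]
          simp [map_add, _root_.map_mul, Complex.conj_I, Complex.conj_ofReal]
          ring
        rw [this]
        apply Complex.ext
        · simp; exact ht.symm
        · simp only [Complex.sub_im, Complex.ofReal_im, Complex.mul_im, Complex.I_im,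
            Complex.ofReal_re, Complex.I_re]
          have : Real.sqrt (1 - t ^ 2) = -a.im := by
            rw [← him2, show a.im ^ 2 = (-a.im) ^ 2 by ring, Real.sqrt_sq (by linarith)]
          rw [this]
          ring
      have hae' : A 1 1 = e := by
        rw [hd, hae, ← hce, Complex.conj_conj]
      have hgmat : A = !![e', 0; 0, e] := by
        rw [Matrix.eta_fin_two A, hc0, hae', ← ha, ← hb, hb0, hae]
      apply mem_conjClass_of (h := weyl)
      apply su2_ext
      rw [toMat_mul, toMat_mul, toMat_diag, ← he, ← he', ← hA, hgmat]
      show !![0, 1; -1, 0] * _ = _ * !![0, 1; -1, 0]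
      ext i j
      fin_cases i <;> fin_cases j <;>
        simp [Matrix.mul_apply, Fin.sum_univ_two, Matrix.diagonal]
  · -- generic case: b ≠ 0
    have hce' : (starRingEnd ℂ) e' = e := by rw [← hce, Complex.conj_conj]
    set N : ℝ := Complex.normSq b + Complex.normSq (e - a) with hN
    have hNpos : 0 < N := by
      have := Complex.normSq_nonneg (e - a)
      have := Complex.normSq_pos.mpr hb0
      linarith
    set r : ℝ := Real.sqrt N with hr
    have hrpos : 0 < r := Real.sqrt_pos.mpr hNpos
    have hr0 : ((r : ℂ)) ≠ 0 := by
      simpa using ne_of_gt hrpos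
    have hrr : (r : ℂ) * r = (N : ℂ) := by
      rw [← Complex.ofReal_mul]
      norm_cast
      rw [hr]
      exact Real.mul_self_sqrt hNpos.le
    have hbb : b * (starRingEnd ℂ) b + (e - a) * (e' - (starRingEnd ℂ) a) = (N : ℂ) := by
      rw [show (e' - (starRingEnd ℂ) a : ℂ) = (starRingEnd ℂ) (e - a) by
        rw [map_sub, hce], Complex.mul_conj, Complex.mul_conj, hN]
      push_cast; ring
    set M : Matrix (Fin 2) (Fin 2) ℂ :=
      !![b, -(e' - (starRingEnd ℂ) a); e - a, (starRingEnd ℂ) b] with hM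
    have hNcast : ((Complex.normSq b + Complex.normSq (e - a) : ℝ) : ℂ) = ((N : ℝ) : ℂ) := by
      rw [← hN]
    have hMM : M * star M = (N : ℂ) • 1 := by
      ext i j
      fin_cases i <;> fin_cases j <;>
        simp only [hM, Matrix.mul_apply, Fin.sum_univ_two, Matrix.star_apply,
          Matrix.smul_apply, Matrix.one_apply, Complex.star_def, map_sub, map_neg,
          Complex.conj_conj, hce, hce', Matrix.cons_val', Matrix.cons_val_zero,
          Matrix.cons_val_one, Matrix.head_cons, Matrix.empty_val',
          Matrix.cons_val_fin_one, Matrix.head_fin_const, Matrix.of_apply,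
          Fin.isValue, smul_eq_mul, ite_true, ite_false, Fin.zero_eta, Fin.mk_one,
          ne_eq, one_ne_zero, not_false_eq_true, zero_ne_one, mul_one, mul_zero,
          if_true, if_false] <;>
        first
        | linear_combination hbb
        | linear_combination hbb - hNcast
        | ring
    set P : Matrix (Fin 2) (Fin 2) ℂ := ((r : ℂ))⁻¹ • M with hP
    have hPunit : P * star P = 1 := by
      rw [hP, Matrix.star_eq_conjTranspose, Matrix.conjTranspose_smul, Matrix.smul_mul,
        Matrix.mul_smul, ← Matrix.star_eq_conjTranspose, hMM, smul_smul, smul_smul]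
      rw [show star ((r:ℂ))⁻¹ = ((r:ℂ))⁻¹ by simp [Complex.star_def]]
      rw [show (r:ℂ)⁻¹ * (r:ℂ)⁻¹ * (N:ℂ) = ((r:ℂ) * r)⁻¹ * N by rw [mul_inv], hrr]
      rw [inv_mul_cancel₀ (by exact_mod_cast ne_of_gt hNpos), one_smul]
    have hPdet : P.det = 1 := by
      rw [hP, Matrix.det_smul, hM, Matrix.det_fin_two_of]
      rw [Fintype.card_fin]
      rw [show b * (starRingEnd ℂ) b - -(e' - (starRingEnd ℂ) a) * (e - a) = (N : ℂ) by
        linear_combination hbb]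
      rw [show ((r:ℂ)⁻¹) ^ 2 = ((r:ℂ) * r)⁻¹ by rw [sq, mul_inv], hrr]
      exact inv_mul_cancel₀ (by exact_mod_cast ne_of_gt hNpos)
    apply mem_conjClass_of (h := mkSU2 P hPunit hPdet)
    apply su2_ext
    rw [toMat_mul, toMat_mul, toMat_diag, ← he, ← he', toMat_mkSU2, ← hA]
    rw [hP, Matrix.smul_mul, Matrix.mul_smul]
    congr 1
    rw [show A = !![a, b; -(starRingEnd ℂ) b, (starRingEnd ℂ) a] from by
      rw [Matrix.eta_fin_two A, ← ha, ← hb, hc, hd]]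
    rw [hM]
    ext i j
    fin_cases i <;> fin_cases j <;>
      simp only [Matrix.mul_apply, Fin.sum_univ_two, Matrix.diagonal,
        Matrix.cons_val', Matrix.cons_val_zero, Matrix.cons_val_one, Matrix.head_cons,
        Matrix.empty_val', Matrix.cons_val_fin_one, Matrix.head_fin_const,
        Matrix.of_apply, Fin.isValue, Matrix.cons_val_fin_one, ne_eq,
        Fin.zero_eta, Fin.mk_one, one_ne_zero, zero_ne_one, not_false_eq_true,
        if_true, if_false, ite_true, ite_false, mul_zero, mul_one, zero_mul,
        add_zero, zero_add] <;>
      first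
      | linear_combination -hq' - hnorm
      | linear_combination hq + hnorm
      | ring

lemma conjClass_trans {l : ℝ} {x y : SU2} (hx : x ∈ conjClass l) (hy : y ∈ conjClass l) :
    ∃ k : SU2, k * x * k⁻¹ = y := by
  obtain ⟨h1, rfl⟩ := hx
  obtain ⟨h2, rfl⟩ := hy
  exact ⟨h2 * h1⁻¹, by group⟩

lemma classProd_split {m : ℕ} (l : Fin (m + 2) → ℝ) :
    classProd l = classProd (fun i : Fin m => l (Fin.castLE (by omega) i)) *
      conjClass (l ⟨m, by omega⟩) * conjClass (l ⟨m + 1, by omega⟩) := by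
  show (List.ofFn _).prod = _
  rw [List.ofFn_succ', List.prod_concat, List.ofFn_succ', List.prod_concat]
  rfl

/-- For `n ≥ 2` and `λ₁, …, λ_{n+1} ∈ [0, π]`, the identity belongs to
`C(λ₁)⋯C(λ_{n+1})` iff there exists `λ ∈ [0, π]` such that the identity belongs to
`C(λ₁)⋯C(λ_{n−1})C(λ)` and to `C(λ)C(λ_n)C(λ_{n+1})`. -/
theorem one_mem_classProd_iff_glue (n : ℕ) (hn : 2 ≤ n) (l : Fin (n + 1) → ℝ)
    (hl : ∀ i, l i ∈ Set.Icc 0 Real.pi) :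
    (1 : SU2) ∈ classProd l ↔
      ∃ μ ∈ Set.Icc (0 : ℝ) Real.pi,
        (1 : SU2) ∈ classProd (fun i : Fin (n - 1) => l (Fin.castLE (by omega) i))
            * conjClass μ ∧
        (1 : SU2) ∈ conjClass μ * conjClass (l ⟨n - 1, by omega⟩)
            * conjClass (l ⟨n, by omega⟩) := by
  obtain ⟨m, rfl⟩ : ∃ m, n = m + 2 := ⟨n - 2, by omega⟩
  have hsplit := classProd_split (m := m + 1) l
  rw [hsplit]
  constructor
  · rintro h
    obtain ⟨w, hw, y2, hy2, hprod⟩ := Set.mem_mul.mp h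
    obtain ⟨x, hx, y1, hy1, rfl⟩ := Set.mem_mul.mp hw
    obtain ⟨μ, hμ, hxinv⟩ := exists_mem_conjClass x⁻¹
    refine ⟨μ, hμ, ?_, ?_⟩
    · have : x * x⁻¹ ∈ _ * conjClass μ := Set.mul_mem_mul hx hxinv
      simpa using this
    · have hxmem : x ∈ conjClass μ := by
        have := inv_mem_conjClass hxinv
        simpa using this
      have : x * y1 * y2 ∈ conjClass μ * conjClass (l ⟨m + 1, by omega⟩)
          * conjClass (l ⟨m + 2, by omega⟩) :=
        Set.mul_mem_mul (Set.mul_mem_mul hxmem hy1) hy2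
      rwa [hprod] at this
  · rintro ⟨μ, hμ, h1, h2⟩
    obtain ⟨x, hx, u, hu, hxu⟩ := Set.mem_mul.mp h1
    obtain ⟨vw, hvw, w2, hw2, hprod⟩ := Set.mem_mul.mp h2
    obtain ⟨v, hv, w1, hw1, rfl⟩ := Set.mem_mul.mp hvw
    have hu' : u = x⁻¹ := eq_inv_of_mul_eq_one_right hxu
    obtain ⟨k, hk⟩ := conjClass_trans (inv_mem_conjClass hv) hu
    have hw12 : w1 * w2 = v⁻¹ := by
      rw [mul_assoc] at hprod
      exact (inv_eq_of_mul_eq_one_right hprod).symm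
    have hmem : x * (k * w1 * k⁻¹) * (k * w2 * k⁻¹) ∈
        classProd (fun i : Fin (m + 1) => l (Fin.castLE (by omega) i)) *
          conjClass (l ⟨m + 1, by omega⟩) * conjClass (l ⟨m + 2, by omega⟩) :=
      Set.mul_mem_mul (Set.mul_mem_mul hx (conj_mem_conjClass k hw1))
        (conj_mem_conjClass k hw2)
    have hone : x * (k * w1 * k⁻¹) * (k * w2 * k⁻¹) = 1 := by
      rw [show x * (k * w1 * k⁻¹) * (k * w2 * k⁻¹) = x * (k * (w1 * w2) * k⁻¹) by group,
        hw12, hk]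
      exact hxu
    rwa [hone] at hmem
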